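/- Let T, P : ℤ → GL(2,ℝ) with sup_{i∈ℤ} ‖T(i)‖ < ∞ and sup_{i∈ℤ} ‖P(i)‖ < ∞, and let Q : ℤ → GL(2,ℝ) be such that P(i) = Q(i+1) T(i) Q(i)⁻¹ for all i ∈ ℤ. Assume there exist constants 0 < C₂ ≤ C₁ with C₂‖x‖ ≤ ‖Q(i)x‖ ≤ C₁‖x‖ for all i ∈ ℤ and all x ∈ ℝ². Then P admits a dominated splitting if and only if T admits a dominated splitting. -/

import Mathlib

open Matrix

noncomputable section

/-- Euclidean plane. -/
abbrev E2 := EuclideanSpace ℝ (Fin 2)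

/-- The real projective line, as the projectivization of `ℝ²`. -/
abbrev RP1 := Projectivization ℝ E2

/-- The linear map on `E2` induced by a `2×2` matrix. -/
def matLin (A : Matrix (Fin 2) (Fin 2) ℝ) : E2 →ₗ[ℝ] E2 :=
  (WithLp.linearEquiv 2 ℝ (Fin 2 → ℝ)).symm.toLinearMap ∘ₗ
    A.mulVecLin ∘ₗ (WithLp.linearEquiv 2 ℝ (Fin 2 → ℝ)).toLinearMap

/-- Matrix-vector multiplication on `E2`. -/
def mulVecE (A : Matrix (Fin 2) (Fin 2) ℝ) (v : E2) : E2 := matLin A v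

/-- The action of an (invertible) matrix on the projective line `RP1`
(junk value if the matrix is not injective). -/
def matAct (A : Matrix (Fin 2) (Fin 2) ℝ) (x : RP1) : RP1 :=
  open scoped Classical in
  if h : Function.Injective (matLin A) then Projectivization.map (matLin A) h x else x

/-- The (Euclidean) operator norm of a `2×2` matrix. -/
def matOpNorm (A : Matrix (Fin 2) (Fin 2) ℝ) : ℝ :=
  ‖LinearMap.toContinuousLinearMap (matLin A)‖

/-- The metric `d([u],[w]) = √(1 − (⟨u,w⟩/(‖u‖‖w‖))²)` on `RP1`. -/
def projDist (x y : RP1) : ℝ :=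
  Real.sqrt (1 - ((inner ℝ x.rep y.rep : ℝ) / (‖x.rep‖ * ‖y.rep‖)) ^ 2)

/-- Forward cocycle iterates: `fwd A n i = A(i+n−1)⋯A(i)`. -/
def fwd (A : ℤ → Matrix (Fin 2) (Fin 2) ℝ) : ℕ → ℤ → Matrix (Fin 2) (Fin 2) ℝ
  | 0, _ => 1
  | n + 1, i => A (i + n) * fwd A n i

/-- Backward cocycle iterates: `bwd A n i = A(i−n)⁻¹⋯A(i−1)⁻¹`. -/
def bwd (A : ℤ → Matrix (Fin 2) (Fin 2) ℝ) : ℕ → ℤ → Matrix (Fin 2) (Fin 2) ℝ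
  | 0, _ => 1
  | n + 1, i => bwd A n (i - 1) * (A (i - 1))⁻¹

/-- `w` is a nonzero vector spanning the line `x ∈ RP1`. -/
def SpansLine (w : E2) (x : RP1) : Prop := ∃ h : w ≠ 0, Projectivization.mk ℝ w h = x

/-- Uniform hyperbolicity witnessed by unstable/stable directions `u`, `s`. -/
def IsUHWith (P : ℤ → Matrix (Fin 2) (Fin 2) ℝ) (u s : ℤ → RP1) : Prop :=
  (∀ i : ℤ, matAct (P i) (u i) = u (i + 1) ∧ matAct (P i) (s i) = s (i + 1)) ∧
  ∃ C > 0, ∃ η > 1, ∀ i : ℤ, ∀ n : ℕ,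
    (∀ w : E2, ‖w‖ = 1 → SpansLine w (u i) → ‖mulVecE (bwd P n i) w‖ ≤ C / η ^ n) ∧
    (∀ w : E2, ‖w‖ = 1 → SpansLine w (s i) → ‖mulVecE (fwd P n i) w‖ ≤ C / η ^ n)

/-- Uniform hyperbolicity of a cocycle. -/
def IsUH (P : ℤ → Matrix (Fin 2) (Fin 2) ℝ) : Prop := ∃ u s, IsUHWith P u s

/-- Dominated splitting (DS1)–(DS4). -/
def IsDS (T : ℤ → Matrix (Fin 2) (Fin 2) ℝ) : Prop :=
  ∃ u s : ℤ → RP1,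
    (∀ i : ℤ, matAct (T i) (u i) = u (i + 1) ∧ matAct (T i) (s i) = s (i + 1)) ∧
    ∃ N : ℕ, 1 ≤ N ∧
      (∃ η > 1, ∀ i : ℤ, ∀ w w' : E2, ‖w‖ = 1 → ‖w'‖ = 1 →
        SpansLine w (u i) → SpansLine w' (s i) →
        ‖mulVecE (fwd T N i) w‖ > η * ‖mulVecE (fwd T N i) w'‖) ∧
      (∃ δ > 0, ∀ i : ℤ, projDist (u i) (s i) > δ) ∧
      (∃ c > 0, ∀ i : ℤ, c ≤ matOpNorm (fwd T N i))

def crossE (v w : E2) : ℝ := v 0 * w 1 - v 1 * w 0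

lemma inner_E2 (v w : E2) : (inner ℝ v w : ℝ) = v 0 * w 0 + v 1 * w 1 := by
  simp [PiLp.inner_apply, RCLike.inner_apply, Fin.sum_univ_two, mul_comm]

lemma lagrange (v w : E2) : (inner ℝ v w : ℝ)^2 + crossE v w ^ 2 = ‖v‖^2 * ‖w‖^2 := by
  have hv := real_inner_self_eq_norm_sq v
  have hw := real_inner_self_eq_norm_sq w
  rw [← hv, ← hw, inner_E2, inner_E2, inner_E2, crossE]
  ring

lemma abs_crossE_le (v w : E2) : |crossE v w| ≤ ‖v‖ * ‖w‖ := by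
  have h := lagrange v w
  nlinarith [sq_nonneg (inner ℝ v w : ℝ), sq_abs (crossE v w), abs_nonneg (crossE v w),
    mul_nonneg (norm_nonneg v) (norm_nonneg w)]

lemma mulVecE_apply (A : Matrix (Fin 2) (Fin 2) ℝ) (v : E2) (i : Fin 2) :
    mulVecE A v i = A i 0 * v 0 + A i 1 * v 1 := by
  show A.mulVec (fun j => v j) i = _
  simp [mulVec, dotProduct, Fin.sum_univ_two]

lemma crossE_mulVecE (A : Matrix (Fin 2) (Fin 2) ℝ) (v w : E2) :
    crossE (mulVecE A v) (mulVecE A w) = A.det * crossE v w := by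
  simp only [crossE, mulVecE_apply, det_fin_two]
  ring

lemma crossE_smul_left (c : ℝ) (v w : E2) : crossE (c • v) w = c * crossE v w := by
  simp [crossE]; ring

lemma crossE_smul_right (c : ℝ) (v w : E2) : crossE v (c • w) = c * crossE v w := by
  simp [crossE]; ring

lemma cramer2 (a b v : E2) : crossE a b • v = crossE v b • a + crossE a v • b := by
  ext j
  fin_cases j <;> simp [crossE] <;> ring

lemma matLin_one : matLin 1 = LinearMap.id := by
  ext v i; simp [matLin]

lemma matLin_mul (A B : Matrix (Fin 2) (Fin 2) ℝ) :
    matLin (A * B) = (matLin A).comp (matLin B) := by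
  ext v i; simp [matLin, mulVec_mulVec]

lemma mulVecE_mul (A B : Matrix (Fin 2) (Fin 2) ℝ) (v : E2) :
    mulVecE (A * B) v = mulVecE A (mulVecE B v) := by
  simp [mulVecE, matLin_mul]

lemma mulVecE_one (v : E2) : mulVecE 1 v = v := by simp [mulVecE, matLin_one]

lemma mulVecE_smul (A : Matrix (Fin 2) (Fin 2) ℝ) (c : ℝ) (v : E2) :
    mulVecE A (c • v) = c • mulVecE A v := map_smul (matLin A) c v

lemma mk_congr {v w : E2} (hv : v ≠ 0) (hw : w ≠ 0) (h : v = w) :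
    Projectivization.mk ℝ v hv = Projectivization.mk ℝ w hw := by subst h; rfl

lemma matLin_injective {A : Matrix (Fin 2) (Fin 2) ℝ} (hA : IsUnit A) :
    Function.Injective (matLin A) := by
  obtain ⟨u, rfl⟩ := hA
  have key : (matLin ((↑u⁻¹ : Matrix (Fin 2) (Fin 2) ℝ))).comp (matLin ↑u) = LinearMap.id := by
    rw [← matLin_mul, Units.inv_mul, matLin_one]
  intro x y h
  have h2 : (matLin ((↑u⁻¹ : Matrix (Fin 2) (Fin 2) ℝ))).comp (matLin ↑u) x
      = (matLin ((↑u⁻¹ : Matrix (Fin 2) (Fin 2) ℝ))).comp (matLin ↑u) y := by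
    simp only [LinearMap.comp_apply, h]
  rw [key] at h2
  exact h2

lemma mulVecE_ne {A : Matrix (Fin 2) (Fin 2) ℝ} (hA : IsUnit A) {v : E2} (hv : v ≠ 0) :
    mulVecE A v ≠ 0 := by
  intro h
  exact hv (matLin_injective hA (by simpa [mulVecE] using h))

lemma matAct_mk {A : Matrix (Fin 2) (Fin 2) ℝ} (hA : IsUnit A) (v : E2) (hv : v ≠ 0) :
    matAct A (Projectivization.mk ℝ v hv) = Projectivization.mk ℝ (mulVecE A v) (mulVecE_ne hA hv) := by
  rw [matAct, dif_pos (matLin_injective hA)]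
  exact Projectivization.map_mk (matLin A) (matLin_injective hA) v hv

lemma mk_smul_eq (v : E2) (hv : v ≠ 0) (c : ℝ) (hc : c ≠ 0) :
    Projectivization.mk ℝ (c • v) (smul_ne_zero hc hv) = Projectivization.mk ℝ v hv := by
  rw [Projectivization.mk_eq_mk_iff]
  exact ⟨Units.mk0 c hc, rfl⟩

def unitRep (x : RP1) : E2 := ‖x.rep‖⁻¹ • x.rep

lemma norm_unitRep (x : RP1) : ‖unitRep x‖ = 1 := by
  have h : x.rep ≠ 0 := x.rep_nonzero
  have h' : ‖x.rep‖ ≠ 0 := norm_ne_zero_iff.2 h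
  simp [unitRep, norm_smul, abs_of_nonneg (norm_nonneg x.rep), inv_mul_cancel₀ h']

lemma unitRep_ne (x : RP1) : unitRep x ≠ 0 := by
  intro h; have := norm_unitRep x; rw [h] at this; simp at this

lemma mk_unitRep (x : RP1) : Projectivization.mk ℝ (unitRep x) (unitRep_ne x) = x := by
  have h' : ‖x.rep‖⁻¹ ≠ 0 := inv_ne_zero (norm_ne_zero_iff.2 x.rep_nonzero)
  conv_rhs => rw [← x.mk_rep]
  rw [Projectivization.mk_eq_mk_iff]
  exact ⟨Units.mk0 _ h', by simp [Units.smul_def, unitRep]⟩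

lemma spansLine_unitRep (x : RP1) : SpansLine (unitRep x) x := ⟨unitRep_ne x, mk_unitRep x⟩

lemma norm_mulVecE_spans (M : Matrix (Fin 2) (Fin 2) ℝ) {w : E2} {x : RP1}
    (hw : ‖w‖ = 1) (hs : SpansLine w x) :
    ‖mulVecE M w‖ = ‖mulVecE M (unitRep x)‖ := by
  obtain ⟨h0, hmk⟩ := hs
  have : Projectivization.mk ℝ w h0 = Projectivization.mk ℝ (unitRep x) (unitRep_ne x) := by
    rw [hmk, mk_unitRep]
  rw [Projectivization.mk_eq_mk_iff] at this
  obtain ⟨a, ha⟩ := this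
  have hx : ((a : ℝ) • unitRep x) = w := by
    rw [← ha]; rfl
  have hnorm : |(a : ℝ)| = 1 := by
    have := congrArg norm hx
    rw [norm_smul, norm_unitRep, hw] at this
    simpa using this
  rw [← hx, mulVecE_smul, norm_smul, Real.norm_eq_abs, hnorm, one_mul]

lemma matAct_matAct {A B : Matrix (Fin 2) (Fin 2) ℝ} (hA : IsUnit A) (hB : IsUnit B) (x : RP1) :
    matAct (A * B) x = matAct A (matAct B x) := by
  conv_lhs => rw [← x.mk_rep]
  conv_rhs => rw [← x.mk_rep]
  rw [matAct_mk (hA.mul hB), matAct_mk hB, matAct_mk hA]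
  exact mk_congr _ _ (mulVecE_mul A B x.rep)

lemma matAct_one (x : RP1) : matAct 1 x = x := by
  conv_lhs => rw [← x.mk_rep]
  rw [matAct_mk isUnit_one]
  conv_rhs => rw [← x.mk_rep]
  exact mk_congr _ _ (mulVecE_one _)
lemma projDist_mk (v w : E2) (hv : v ≠ 0) (hw : w ≠ 0) :
    projDist (Projectivization.mk ℝ v hv) (Projectivization.mk ℝ w hw)
      = |crossE v w| / (‖v‖ * ‖w‖) := by
  obtain ⟨a, ha⟩ := Projectivization.exists_smul_eq_mk_rep ℝ v hv
  obtain ⟨b, hb⟩ := Projectivization.exists_smul_eq_mk_rep ℝ w hw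
  set x := Projectivization.mk ℝ v hv with hxdef
  set y := Projectivization.mk ℝ w hw with hydef
  have hxr : x.rep = (a : ℝ) • v := by rw [← ha]; rfl
  have hyr : y.rep = (b : ℝ) • w := by rw [← hb]; rfl
  have hnv : (0:ℝ) < ‖v‖ := norm_pos_iff.2 hv
  have hnw : (0:ℝ) < ‖w‖ := norm_pos_iff.2 hw
  have ha0 : ((a : ℝ)) ≠ 0 := a.ne_zero
  have hb0 : ((b : ℝ)) ≠ 0 := b.ne_zero
  have key : (inner ℝ x.rep y.rep : ℝ) / (‖x.rep‖ * ‖y.rep‖)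
      = ((a:ℝ)*(b:ℝ)/(|(a:ℝ)| * |(b:ℝ)|)) * ((inner ℝ v w : ℝ) / (‖v‖*‖w‖)) := by
    rw [hxr, hyr, real_inner_smul_left, real_inner_smul_right, norm_smul, norm_smul,
      Real.norm_eq_abs, Real.norm_eq_abs]
    field_simp
  have hsq : ((a:ℝ)*(b:ℝ)/(|(a:ℝ)| * |(b:ℝ)|))^2 = 1 := by
    rw [div_pow, mul_pow, mul_pow, sq_abs, sq_abs]
    field_simp
  have h2 : ((inner ℝ x.rep y.rep : ℝ) / (‖x.rep‖ * ‖y.rep‖))^2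
      = ((inner ℝ v w : ℝ) / (‖v‖*‖w‖))^2 := by
    rw [key, mul_pow, hsq, one_mul]
  rw [projDist, h2]
  have hL := lagrange v w
  have h3 : 1 - ((inner ℝ v w : ℝ) / (‖v‖*‖w‖))^2 = (|crossE v w| / (‖v‖*‖w‖))^2 := by
    rw [div_pow, div_pow, sq_abs]
    rw [eq_div_iff (by positivity), sub_mul, div_mul_cancel₀ _ (by positivity), one_mul]
    nlinarith [hL]
  rw [h3, Real.sqrt_sq (by positivity)]

/-- standard basis vectors -/
def e2v (i : Fin 2) : E2 := EuclideanSpace.single i 1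

lemma crossE_e2v : crossE (e2v 0) (e2v 1) = 1 := by
  simp [crossE, e2v, EuclideanSpace.single_apply]

lemma norm_e2v (i : Fin 2) : ‖e2v i‖ = 1 := by
  simp [e2v]

lemma crossE_lower {g : GL (Fin 2) ℝ} {C₂ : ℝ} (hC₂ : 0 < C₂)
    (h : ∀ x : E2, C₂ * ‖x‖ ≤ ‖mulVecE (↑g) x‖) (v w : E2) :
    C₂^2 * |crossE v w| ≤ |crossE (mulVecE (↑g) v) (mulVecE (↑g) w)| := by
  set M : Matrix (Fin 2) (Fin 2) ℝ := ↑g with hM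
  set Minv : Matrix (Fin 2) (Fin 2) ℝ := ↑g⁻¹ with hMinv
  have hMM : ∀ x : E2, mulVecE M (mulVecE Minv x) = x := by
    intro x
    rw [← mulVecE_mul, hM, hMinv, ← Units.val_mul, mul_inv_cancel, Units.val_one, mulVecE_one]
  have hinv : ∀ x : E2, ‖mulVecE Minv x‖ ≤ ‖x‖ / C₂ := by
    intro x
    have := h (mulVecE Minv x)
    rw [hMM x] at this
    rw [le_div_iff₀ hC₂]
    linarith
  have hdet : crossE v w = Minv.det * crossE (mulVecE M v) (mulVecE M w) := by
    have := crossE_mulVecE Minv (mulVecE M v) (mulVecE M w)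
    rw [← mulVecE_mul, ← mulVecE_mul, hM, hMinv, ← Units.val_mul, inv_mul_cancel,
      Units.val_one, mulVecE_one, mulVecE_one] at this
    exact this
  have hdetb : |Minv.det| ≤ 1 / C₂^2 := by
    have h1 : crossE (mulVecE Minv (e2v 0)) (mulVecE Minv (e2v 1)) = Minv.det := by
      rw [crossE_mulVecE, crossE_e2v, mul_one]
    have h2 : |crossE (mulVecE Minv (e2v 0)) (mulVecE Minv (e2v 1))|
        ≤ (1 / C₂) * (1 / C₂) := by
      refine (abs_crossE_le _ _).trans ?_
      have i0 := hinv (e2v 0); have i1 := hinv (e2v 1)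
      rw [norm_e2v] at i0 i1
      exact mul_le_mul i0 i1 (norm_nonneg _) (by positivity)
    rw [h1] at h2
    calc |Minv.det| ≤ (1/C₂)*(1/C₂) := h2
    _ = 1 / C₂^2 := by ring
  calc C₂^2 * |crossE v w|
      = C₂^2 * (|Minv.det| * |crossE (mulVecE M v) (mulVecE M w)|) := by
        rw [← abs_mul, ← hdet]
    _ ≤ C₂^2 * ((1/C₂^2) * |crossE (mulVecE M v) (mulVecE M w)|) := by
        have hX : (0:ℝ) ≤ |crossE (mulVecE M v) (mulVecE M w)| := abs_nonneg _
        exact mul_le_mul_of_nonneg_left (mul_le_mul_of_nonneg_right hdetb hX) (by positivity)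
    _ = |crossE (mulVecE M v) (mulVecE M w)| := by
        field_simp

lemma fwd_succ (A : ℤ → Matrix (Fin 2) (Fin 2) ℝ) (n : ℕ) (i : ℤ) :
    fwd A (n + 1) i = A (i + n) * fwd A n i := rfl

lemma fwd_add (A : ℤ → Matrix (Fin 2) (Fin 2) ℝ) (m n : ℕ) (i : ℤ) :
    fwd A (m + n) i = fwd A m (i + n) * fwd A n i := by
  induction m with
  | zero => simp [fwd]
  | succ m ih =>
    have h1 : m + 1 + n = (m + n) + 1 := by ring
    rw [h1, fwd_succ, ih, fwd_succ, ← mul_assoc]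
    congr 3
    push_cast; ring

lemma fwd_isUnit (T : ℤ → GL (Fin 2) ℝ) (n : ℕ) (i : ℤ) :
    IsUnit (fwd (fun j => (T j : Matrix (Fin 2) (Fin 2) ℝ)) n i) := by
  induction n with
  | zero => exact isUnit_one
  | succ n ih => exact ((T (i + n)).isUnit).mul ih

lemma norm_mulVecE_comp {G : Matrix (Fin 2) (Fin 2) ℝ} (hG : IsUnit G)
    (M : Matrix (Fin 2) (Fin 2) ℝ) {x y : RP1} (hxy : matAct G x = y) :
    ‖mulVecE (M * G) (unitRep x)‖
      = ‖mulVecE G (unitRep x)‖ * ‖mulVecE M (unitRep y)‖ := by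
  set v : E2 := mulVecE G (unitRep x) with hv
  have hv0 : v ≠ 0 := mulVecE_ne hG (unitRep_ne x)
  have hr : (0:ℝ) < ‖v‖ := norm_pos_iff.2 hv0
  have hmkv : Projectivization.mk ℝ v hv0 = y := by
    rw [← hxy, ← mk_unitRep x, matAct_mk hG]
  have hspan : SpansLine (‖v‖⁻¹ • v) y := by
    refine ⟨smul_ne_zero (inv_ne_zero hr.ne') hv0, ?_⟩
    rw [mk_smul_eq v hv0 _ (inv_ne_zero hr.ne')]
    exact hmkv
  have hnorm1 : ‖(‖v‖⁻¹ • v)‖ = 1 := by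
    rw [norm_smul, Real.norm_eq_abs, abs_of_pos (inv_pos.2 hr), inv_mul_cancel₀ hr.ne']
  have key := norm_mulVecE_spans M hnorm1 hspan
  rw [mulVecE_mul, ← key, mulVecE_smul, norm_smul, Real.norm_eq_abs,
    abs_of_pos (inv_pos.2 hr)]
  field_simp
  rfl
lemma matAct_fwd (T : ℤ → GL (Fin 2) ℝ) (u : ℤ → RP1)
    (hu : ∀ i : ℤ, matAct ((T i : Matrix (Fin 2) (Fin 2) ℝ)) (u i) = u (i + 1)) :
    ∀ (n : ℕ) (i : ℤ), matAct (fwd (fun j => (T j : Matrix (Fin 2) (Fin 2) ℝ)) n i) (u i) = u (i + n) := by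
  intro n
  induction n with
  | zero => intro i; simp [fwd, matAct_one]
  | succ n ih =>
    intro i
    rw [fwd_succ, matAct_matAct ((T (i + n)).isUnit) (fwd_isUnit T n i), ih i, hu (i + n)]
    congr 1
    push_cast; ring

lemma fwd_conj (T P Q : ℤ → GL (Fin 2) ℝ)
    (hconj : ∀ i : ℤ, (P i : Matrix (Fin 2) (Fin 2) ℝ) =
      (Q (i + 1) : Matrix (Fin 2) (Fin 2) ℝ) * (T i : Matrix (Fin 2) (Fin 2) ℝ) *
        ((Q i : Matrix (Fin 2) (Fin 2) ℝ))⁻¹) :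
    ∀ (n : ℕ) (i : ℤ), fwd (fun j => (P j : Matrix (Fin 2) (Fin 2) ℝ)) n i =
      (Q (i + n) : Matrix (Fin 2) (Fin 2) ℝ) *
        fwd (fun j => (T j : Matrix (Fin 2) (Fin 2) ℝ)) n i *
        (((Q i)⁻¹ : GL (Fin 2) ℝ) : Matrix (Fin 2) (Fin 2) ℝ) := by
  have hconj' : ∀ i : ℤ, (P i : Matrix (Fin 2) (Fin 2) ℝ) =
      (Q (i + 1) : Matrix (Fin 2) (Fin 2) ℝ) * (T i : Matrix (Fin 2) (Fin 2) ℝ) *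
        (((Q i)⁻¹ : GL (Fin 2) ℝ) : Matrix (Fin 2) (Fin 2) ℝ) := by
    intro i
    rw [Matrix.coe_units_inv]
    exact hconj i
  intro n
  induction n with
  | zero =>
    intro i
    simp only [fwd, Int.natCast_zero, add_zero, mul_one]
    rw [← Units.val_mul, mul_inv_cancel, Units.val_one]
  | succ n ih =>
    intro i
    rw [fwd_succ, ih i, hconj' (i + n), fwd_succ]
    have hcan : (((Q (i + n))⁻¹ : GL (Fin 2) ℝ) : Matrix (Fin 2) (Fin 2) ℝ) *
        ((Q (i + n) : Matrix (Fin 2) (Fin 2) ℝ)) = 1 := by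
      rw [← Units.val_mul, inv_mul_cancel, Units.val_one]
    have harith : (i : ℤ) + (n : ℤ) + 1 = i + ((n : ℕ) + 1 : ℕ) := by push_cast; ring
    calc (Q (i + n + 1) : Matrix (Fin 2) (Fin 2) ℝ) * (T (i + n) : Matrix (Fin 2) (Fin 2) ℝ) *
          (((Q (i + n))⁻¹ : GL (Fin 2) ℝ) : Matrix (Fin 2) (Fin 2) ℝ) *
          ((Q (i + n) : Matrix (Fin 2) (Fin 2) ℝ) *
            fwd (fun j => (T j : Matrix (Fin 2) (Fin 2) ℝ)) n i *
            (((Q i)⁻¹ : GL (Fin 2) ℝ) : Matrix (Fin 2) (Fin 2) ℝ))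
        = (Q (i + n + 1) : Matrix (Fin 2) (Fin 2) ℝ) * (T (i + n) : Matrix (Fin 2) (Fin 2) ℝ) *
          ((((Q (i + n))⁻¹ : GL (Fin 2) ℝ) : Matrix (Fin 2) (Fin 2) ℝ) *
            (Q (i + n) : Matrix (Fin 2) (Fin 2) ℝ)) *
          fwd (fun j => (T j : Matrix (Fin 2) (Fin 2) ℝ)) n i *
          (((Q i)⁻¹ : GL (Fin 2) ℝ) : Matrix (Fin 2) (Fin 2) ℝ) := by
          simp only [mul_assoc]
      _ = (Q (i + ((n : ℕ) + 1 : ℕ)) : Matrix (Fin 2) (Fin 2) ℝ) *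
          ((T (i + n) : Matrix (Fin 2) (Fin 2) ℝ) *
            fwd (fun j => (T j : Matrix (Fin 2) (Fin 2) ℝ)) n i) *
          (((Q i)⁻¹ : GL (Fin 2) ℝ) : Matrix (Fin 2) (Fin 2) ℝ) := by
          rw [hcan, mul_one, harith]
          simp only [mul_assoc]

lemma mulVecE_le_opNorm (M : Matrix (Fin 2) (Fin 2) ℝ) (x : E2) :
    ‖mulVecE M x‖ ≤ matOpNorm M * ‖x‖ := by
  have := (LinearMap.toContinuousLinearMap (matLin M)).le_opNorm x
  simpa [matOpNorm, mulVecE] using this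

lemma matOpNorm_le_bound (M : Matrix (Fin 2) (Fin 2) ℝ) {K : ℝ} (hK : 0 ≤ K)
    (h : ∀ x : E2, ‖mulVecE M x‖ ≤ K * ‖x‖) : matOpNorm M ≤ K := by
  refine ContinuousLinearMap.opNorm_le_bound _ hK ?_
  intro x
  simpa [mulVecE] using h x

lemma norm_mulVecE_unitRep_pos {M : Matrix (Fin 2) (Fin 2) ℝ} (hM : IsUnit M) (x : RP1) :
    0 < ‖mulVecE M (unitRep x)‖ :=
  norm_pos_iff.2 (mulVecE_ne hM (unitRep_ne x))
section iter
variable (T : ℤ → GL (Fin 2) ℝ) (u s : ℤ → RP1)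

local notation "Tm" => (fun j => (T j : Matrix (Fin 2) (Fin 2) ℝ))

lemma dom_iter
    (hu : ∀ i : ℤ, matAct ((T i : Matrix (Fin 2) (Fin 2) ℝ)) (u i) = u (i + 1))
    (hs : ∀ i : ℤ, matAct ((T i : Matrix (Fin 2) (Fin 2) ℝ)) (s i) = s (i + 1))
    (N : ℕ) (η : ℝ) (hη : 1 < η)
    (h2 : ∀ i : ℤ, η * ‖mulVecE (fwd Tm N i) (unitRep (s i))‖
        < ‖mulVecE (fwd Tm N i) (unitRep (u i))‖) :
    ∀ (k : ℕ) (i : ℤ), η ^ (k+1) * ‖mulVecE (fwd Tm ((k+1)*N) i) (unitRep (s i))‖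
        < ‖mulVecE (fwd Tm ((k+1)*N) i) (unitRep (u i))‖ := by
  intro k
  induction k with
  | zero => intro i; simpa using h2 i
  | succ k ih =>
    intro i
    have hsplit : (k + 2) * N = N + (k+1) * N := by ring
    have hfwd : fwd Tm ((k+2)*N) i = fwd Tm N (i + ((k+1)*N : ℕ)) * fwd Tm ((k+1)*N) i := by
      rw [hsplit, fwd_add]
    have hGu := fwd_isUnit T ((k+1)*N) i
    have hmu : matAct (fwd Tm ((k+1)*N) i) (u i) = u (i + ((k+1)*N : ℕ)) :=
      matAct_fwd T u hu _ i
    have hms : matAct (fwd Tm ((k+1)*N) i) (s i) = s (i + ((k+1)*N : ℕ)) :=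
      matAct_fwd T s hs _ i
    have hcu := norm_mulVecE_comp hGu (fwd Tm N (i + ((k+1)*N : ℕ))) hmu
    have hcs := norm_mulVecE_comp hGu (fwd Tm N (i + ((k+1)*N : ℕ))) hms
    rw [hfwd, hcu, hcs]
    have ihh := ih i
    have h2' := h2 (i + ((k+1)*N : ℕ))
    have p1 : 0 < ‖mulVecE (fwd Tm ((k+1)*N) i) (unitRep (s i))‖ :=
      norm_mulVecE_unitRep_pos hGu _
    have p2 : 0 < ‖mulVecE (fwd Tm N (i + ((k+1)*N : ℕ))) (unitRep (s (i + ((k+1)*N : ℕ))))‖ :=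
      norm_mulVecE_unitRep_pos (fwd_isUnit T N _) _
    have hpow : (0:ℝ) < η ^ (k+1) := by positivity
    calc η ^ (k+1+1) * (‖mulVecE (fwd Tm ((k+1)*N) i) (unitRep (s i))‖ *
            ‖mulVecE (fwd Tm N (i + ((k+1)*N : ℕ))) (unitRep (s (i + ((k+1)*N : ℕ))))‖)
        = (η ^ (k+1) * ‖mulVecE (fwd Tm ((k+1)*N) i) (unitRep (s i))‖) *
          (η * ‖mulVecE (fwd Tm N (i + ((k+1)*N : ℕ))) (unitRep (s (i + ((k+1)*N : ℕ))))‖) := by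
          ring
      _ < ‖mulVecE (fwd Tm ((k+1)*N) i) (unitRep (u i))‖ *
          ‖mulVecE (fwd Tm N (i + ((k+1)*N : ℕ))) (unitRep (u (i + ((k+1)*N : ℕ))))‖ := by
          apply mul_lt_mul'' ihh h2'
          · positivity
          · positivity

lemma low_iter
    (hu : ∀ i : ℤ, matAct ((T i : Matrix (Fin 2) (Fin 2) ℝ)) (u i) = u (i + 1))
    (N : ℕ) (b : ℝ) (hb : 0 < b)
    (hlow : ∀ i : ℤ, b ≤ ‖mulVecE (fwd Tm N i) (unitRep (u i))‖) :
    ∀ (k : ℕ) (i : ℤ), b ^ k ≤ ‖mulVecE (fwd Tm (k*N) i) (unitRep (u i))‖ := by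
  intro k
  induction k with
  | zero =>
    intro i
    simp only [Nat.zero_mul, pow_zero, fwd]
    rw [mulVecE_one, norm_unitRep]
  | succ k ih =>
    intro i
    have hsplit : (k + 1) * N = N + k * N := by ring
    have hfwd : fwd Tm ((k+1)*N) i = fwd Tm N (i + (k*N : ℕ)) * fwd Tm (k*N) i := by
      rw [hsplit, fwd_add]
    have hGu := fwd_isUnit T (k*N) i
    have hmu : matAct (fwd Tm (k*N) i) (u i) = u (i + (k*N : ℕ)) :=
      matAct_fwd T u hu _ i
    have hcu := norm_mulVecE_comp hGu (fwd Tm N (i + (k*N : ℕ))) hmu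
    rw [hfwd, hcu, pow_succ]
    exact mul_le_mul (ih i) (hlow _) hb.le (norm_nonneg _)
end iter
lemma norm_mulVecE_spans' (M : Matrix (Fin 2) (Fin 2) ℝ) {v : E2} {x : RP1} (hv : v ≠ 0)
    (hmk : Projectivization.mk ℝ v hv = x) :
    ‖mulVecE M v‖ = ‖v‖ * ‖mulVecE M (unitRep x)‖ := by
  have hr : (0:ℝ) < ‖v‖ := norm_pos_iff.2 hv
  have hspan : SpansLine (‖v‖⁻¹ • v) x := by
    refine ⟨smul_ne_zero (inv_ne_zero hr.ne') hv, ?_⟩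
    rw [mk_smul_eq v hv _ (inv_ne_zero hr.ne')]; exact hmk
  have h1 : ‖(‖v‖⁻¹ • v)‖ = 1 := by
    rw [norm_smul, Real.norm_eq_abs, abs_of_pos (inv_pos.2 hr), inv_mul_cancel₀ hr.ne']
  rw [← norm_mulVecE_spans M h1 hspan, mulVecE_smul, norm_smul, Real.norm_eq_abs,
    abs_of_pos (inv_pos.2 hr)]
  field_simp

section lowbd
variable (T : ℤ → GL (Fin 2) ℝ) (u s : ℤ → RP1)
local notation "Tm" => (fun j => (T j : Matrix (Fin 2) (Fin 2) ℝ))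

lemma unit_lower (N : ℕ) (η δ c : ℝ) (hη : 1 < η) (hδ : 0 < δ)
    (h2 : ∀ i : ℤ, η * ‖mulVecE (fwd Tm N i) (unitRep (s i))‖
        < ‖mulVecE (fwd Tm N i) (unitRep (u i))‖)
    (h3 : ∀ i : ℤ, δ < projDist (u i) (s i))
    (h4 : ∀ i : ℤ, c ≤ matOpNorm (fwd Tm N i)) :
    ∀ i : ℤ, c * δ / 2 ≤ ‖mulVecE (fwd Tm N i) (unitRep (u i))‖ := by
  intro i
  set M := fwd Tm N i with hMdef
  set a := unitRep (u i) with hadef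
  set e := unitRep (s i) with hedef
  have hna : ‖a‖ = 1 := norm_unitRep _
  have hne : ‖e‖ = 1 := norm_unitRep _
  have hMs_le : ‖mulVecE M e‖ ≤ ‖mulVecE M a‖ := by
    have := h2 i
    nlinarith [norm_nonneg (mulVecE M e)]
  have hcr : δ < |crossE a e| := by
    have hh : projDist (u i) (s i) = |crossE a e| / (‖a‖ * ‖e‖) := by
      conv_lhs => rw [← mk_unitRep (u i), ← mk_unitRep (s i)]
      exact projDist_mk a e (unitRep_ne _) (unitRep_ne _)
    rw [hna, hne, mul_one, div_one] at hh
    rw [← hh]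
    exact h3 i
  have hbound : ∀ v : E2, ‖mulVecE M v‖ ≤ (2 * ‖mulVecE M a‖ / δ) * ‖v‖ := by
    intro v
    have hc2 := cramer2 a e v
    have happ : crossE a e • (mulVecE M v)
        = crossE v e • mulVecE M a + crossE a v • mulVecE M e := by
      have := congrArg (matLin M) hc2
      simpa [mulVecE, map_add, _root_.map_smul] using this
    have hn : |crossE a e| * ‖mulVecE M v‖
        ≤ |crossE v e| * ‖mulVecE M a‖ + |crossE a v| * ‖mulVecE M e‖ := by
      calc |crossE a e| * ‖mulVecE M v‖ = ‖crossE a e • mulVecE M v‖ := by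
            rw [norm_smul, Real.norm_eq_abs]
        _ ≤ ‖crossE v e • mulVecE M a‖ + ‖crossE a v • mulVecE M e‖ := by
            rw [happ]; exact norm_add_le _ _
        _ = _ := by rw [norm_smul, norm_smul, Real.norm_eq_abs, Real.norm_eq_abs]
    have hve : |crossE v e| ≤ ‖v‖ := by
      have := abs_crossE_le v e; rwa [hne, mul_one] at this
    have hav : |crossE a v| ≤ ‖v‖ := by
      have := abs_crossE_le a v; rwa [hna, one_mul] at this
    have key : δ * ‖mulVecE M v‖ ≤ 2 * ‖v‖ * ‖mulVecE M a‖ := by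
      have t1 : δ * ‖mulVecE M v‖ ≤ |crossE a e| * ‖mulVecE M v‖ :=
        mul_le_mul_of_nonneg_right hcr.le (norm_nonneg _)
      have t2 : |crossE v e| * ‖mulVecE M a‖ ≤ ‖v‖ * ‖mulVecE M a‖ :=
        mul_le_mul_of_nonneg_right hve (norm_nonneg _)
      have t3 : |crossE a v| * ‖mulVecE M e‖ ≤ ‖v‖ * ‖mulVecE M e‖ :=
        mul_le_mul_of_nonneg_right hav (norm_nonneg _)
      have t4 : ‖v‖ * ‖mulVecE M e‖ ≤ ‖v‖ * ‖mulVecE M a‖ :=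
        mul_le_mul_of_nonneg_left hMs_le (norm_nonneg _)
      linarith
    rw [div_mul_eq_mul_div, le_div_iff₀ hδ]
    linarith
  have hop : matOpNorm M ≤ 2 * ‖mulVecE M a‖ / δ :=
    matOpNorm_le_bound M (by positivity) hbound
  have := (h4 i).trans hop
  rw [le_div_iff₀ hδ] at this
  linarith
end lowbd
section transfer
variable (T P Q : ℤ → GL (Fin 2) ℝ)
local notation "Tm" => (fun j => (T j : Matrix (Fin 2) (Fin 2) ℝ))
local notation "Pm" => (fun j => (P j : Matrix (Fin 2) (Fin 2) ℝ))

lemma ds_transfer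
    (hconj : ∀ i : ℤ, (P i : Matrix (Fin 2) (Fin 2) ℝ) =
      (Q (i + 1) : Matrix (Fin 2) (Fin 2) ℝ) * (T i : Matrix (Fin 2) (Fin 2) ℝ) *
        ((Q i : Matrix (Fin 2) (Fin 2) ℝ))⁻¹)
    (C₁ C₂ : ℝ) (hC₂ : 0 < C₂) (hC₁₂ : C₂ ≤ C₁)
    (hQ : ∀ (i : ℤ) (x : E2),
      C₂ * ‖x‖ ≤ ‖mulVecE (Q i : Matrix (Fin 2) (Fin 2) ℝ) x‖ ∧
        ‖mulVecE (Q i : Matrix (Fin 2) (Fin 2) ℝ) x‖ ≤ C₁ * ‖x‖) :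
    IsDS Tm → IsDS Pm := by
  rintro ⟨u, s, hinv, N, hN1, ⟨η, hη, hDS2⟩, ⟨δ, hδ, hDS3⟩, ⟨c, hc, hDS4⟩⟩
  have hC₁ : (0:ℝ) < C₁ := lt_of_lt_of_le hC₂ hC₁₂
  have hu : ∀ i : ℤ, matAct ((T i : Matrix (Fin 2) (Fin 2) ℝ)) (u i) = u (i+1) :=
    fun i => (hinv i).1
  have hs : ∀ i : ℤ, matAct ((T i : Matrix (Fin 2) (Fin 2) ℝ)) (s i) = s (i+1) :=
    fun i => (hinv i).2
  have h2 : ∀ i : ℤ, η * ‖mulVecE (fwd Tm N i) (unitRep (s i))‖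
      < ‖mulVecE (fwd Tm N i) (unitRep (u i))‖ := fun i =>
    hDS2 i _ _ (norm_unitRep _) (norm_unitRep _) (spansLine_unitRep _) (spansLine_unitRep _)
  obtain ⟨k, hk⟩ := pow_unbounded_of_one_lt ((C₁/C₂)^2) hη
  have hKpow : (C₁/C₂)^2 < η ^ (k+1) := lt_of_lt_of_le hk
    (pow_le_pow_right₀ hη.le (Nat.le_succ k))
  have hdom : ∀ i : ℤ, η ^ (k+1) * ‖mulVecE (fwd Tm ((k+1)*N) i) (unitRep (s i))‖
      < ‖mulVecE (fwd Tm ((k+1)*N) i) (unitRep (u i))‖ := fun i =>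
    dom_iter T u s hu hs N η hη h2 k i
  have hqq : ∀ j : ℤ, (((Q j)⁻¹ : GL (Fin 2) ℝ) : Matrix (Fin 2) (Fin 2) ℝ) *
      (Q j : Matrix (Fin 2) (Fin 2) ℝ) = 1 := by
    intro j; rw [← Units.val_mul, inv_mul_cancel, Units.val_one]
  have hPQ : ∀ i : ℤ, (P i : Matrix (Fin 2) (Fin 2) ℝ) * (Q i : Matrix (Fin 2) (Fin 2) ℝ)
      = (Q (i+1) : Matrix (Fin 2) (Fin 2) ℝ) * (T i : Matrix (Fin 2) (Fin 2) ℝ) := by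
    intro i
    rw [hconj i, ← Matrix.coe_units_inv, mul_assoc, hqq i, mul_one]
  refine ⟨fun i => matAct ((Q i : Matrix (Fin 2) (Fin 2) ℝ)) (u i),
    fun i => matAct ((Q i : Matrix (Fin 2) (Fin 2) ℝ)) (s i), ?_, (k+1)*N,
    Nat.mul_pos (Nat.succ_pos k) hN1, ?_, ?_, ?_⟩
  -- DS1
  · intro i
    constructor
    · show matAct ((P i : Matrix (Fin 2) (Fin 2) ℝ))
          (matAct ((Q i : Matrix (Fin 2) (Fin 2) ℝ)) (u i))
        = matAct ((Q (i+1) : Matrix (Fin 2) (Fin 2) ℝ)) (u (i+1))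
      rw [← matAct_matAct (P i).isUnit (Q i).isUnit, hPQ i,
        matAct_matAct (Q (i+1)).isUnit (T i).isUnit, hu i]
    · show matAct ((P i : Matrix (Fin 2) (Fin 2) ℝ))
          (matAct ((Q i : Matrix (Fin 2) (Fin 2) ℝ)) (s i))
        = matAct ((Q (i+1) : Matrix (Fin 2) (Fin 2) ℝ)) (s (i+1))
      rw [← matAct_matAct (P i).isUnit (Q i).isUnit, hPQ i,
        matAct_matAct (Q (i+1)).isUnit (T i).isUnit, hs i]
  -- DS2
  · refine ⟨η ^ (k+1) * (C₂/C₁)^2, ?_, ?_⟩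
    · have h1 : (0:ℝ) < (C₂/C₁)^2 := by positivity
      have h2' := mul_lt_mul_of_pos_right hKpow h1
      rw [show (C₁/C₂)^2 * (C₂/C₁)^2 = 1 by field_simp] at h2'
      exact h2'
    · intro i w w' hw hw' hsw hsw'
      obtain ⟨hw0, hmkw⟩ := hsw
      obtain ⟨hw0', hmkw'⟩ := hsw'
      have hv0 : mulVecE (((Q i)⁻¹ : GL (Fin 2) ℝ) : Matrix (Fin 2) (Fin 2) ℝ) w ≠ 0 :=
        mulVecE_ne ((Q i)⁻¹).isUnit hw0
      have hv0' : mulVecE (((Q i)⁻¹ : GL (Fin 2) ℝ) : Matrix (Fin 2) (Fin 2) ℝ) w' ≠ 0 :=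
        mulVecE_ne ((Q i)⁻¹).isUnit hw0'
      set v := mulVecE (((Q i)⁻¹ : GL (Fin 2) ℝ) : Matrix (Fin 2) (Fin 2) ℝ) w with hvdef
      set v' := mulVecE (((Q i)⁻¹ : GL (Fin 2) ℝ) : Matrix (Fin 2) (Fin 2) ℝ) w' with hv'def
      have hQv : mulVecE ((Q i : Matrix (Fin 2) (Fin 2) ℝ)) v = w := by
        rw [hvdef, ← mulVecE_mul, ← Units.val_mul, mul_inv_cancel, Units.val_one, mulVecE_one]
      have hQv' : mulVecE ((Q i : Matrix (Fin 2) (Fin 2) ℝ)) v' = w' := by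
        rw [hv'def, ← mulVecE_mul, ← Units.val_mul, mul_inv_cancel, Units.val_one, mulVecE_one]
      have hmkv : Projectivization.mk ℝ v hv0 = u i := by
        have e1 : matAct (((Q i)⁻¹ : GL (Fin 2) ℝ) : Matrix (Fin 2) (Fin 2) ℝ)
            (Projectivization.mk ℝ w hw0) = Projectivization.mk ℝ v hv0 := by
          rw [matAct_mk ((Q i)⁻¹).isUnit]
        rw [hmkw] at e1
        rw [← e1, ← matAct_matAct ((Q i)⁻¹).isUnit (Q i).isUnit, hqq i, matAct_one]
      have hmkv' : Projectivization.mk ℝ v' hv0' = s i := by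
        have e1 : matAct (((Q i)⁻¹ : GL (Fin 2) ℝ) : Matrix (Fin 2) (Fin 2) ℝ)
            (Projectivization.mk ℝ w' hw0') = Projectivization.mk ℝ v' hv0' := by
          rw [matAct_mk ((Q i)⁻¹).isUnit]
        rw [hmkw'] at e1
        rw [← e1, ← matAct_matAct ((Q i)⁻¹).isUnit (Q i).isUnit, hqq i, matAct_one]
      have hFv : ‖mulVecE (fwd Tm ((k+1)*N) i) v‖
          = ‖v‖ * ‖mulVecE (fwd Tm ((k+1)*N) i) (unitRep (u i))‖ :=
        norm_mulVecE_spans' _ hv0 hmkv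
      have hFv' : ‖mulVecE (fwd Tm ((k+1)*N) i) v'‖
          = ‖v'‖ * ‖mulVecE (fwd Tm ((k+1)*N) i) (unitRep (s i))‖ :=
        norm_mulVecE_spans' _ hv0' hmkv'
      have hvlb : 1/C₁ ≤ ‖v‖ := by
        have := (hQ i v).2
        rw [hQv, hw] at this
        rw [div_le_iff₀ hC₁]
        linarith
      have hvub' : ‖v'‖ ≤ 1/C₂ := by
        have := (hQ i v').1
        rw [hQv', hw'] at this
        rw [le_div_iff₀ hC₂]
        linarith
      have hPw : mulVecE (fwd Pm ((k+1)*N) i) w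
          = mulVecE ((Q (i + (((k+1)*N : ℕ) : ℤ)) : Matrix (Fin 2) (Fin 2) ℝ))
              (mulVecE (fwd Tm ((k+1)*N) i) v) := by
        rw [fwd_conj T P Q hconj ((k+1)*N) i, mulVecE_mul, mulVecE_mul]
      have hPw' : mulVecE (fwd Pm ((k+1)*N) i) w'
          = mulVecE ((Q (i + (((k+1)*N : ℕ) : ℤ)) : Matrix (Fin 2) (Fin 2) ℝ))
              (mulVecE (fwd Tm ((k+1)*N) i) v') := by
        rw [fwd_conj T P Q hconj ((k+1)*N) i, mulVecE_mul, mulVecE_mul]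
      set Xu := ‖mulVecE (fwd Tm ((k+1)*N) i) (unitRep (u i))‖ with hXu
      set Xs := ‖mulVecE (fwd Tm ((k+1)*N) i) (unitRep (s i))‖ with hXs
      have hXu0 : 0 ≤ Xu := norm_nonneg _
      have hXs0 : 0 ≤ Xs := norm_nonneg _
      have hA : (C₂/C₁) * Xu ≤ ‖mulVecE (fwd Pm ((k+1)*N) i) w‖ := by
        rw [hPw]
        have e1 := (hQ (i + (((k+1)*N : ℕ) : ℤ)) (mulVecE (fwd Tm ((k+1)*N) i) v)).1
        rw [hFv] at e1
        have step : (C₂/C₁) * Xu ≤ C₂ * (‖v‖ * Xu) := by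
          have h3 := mul_le_mul_of_nonneg_right hvlb hXu0
          calc (C₂/C₁) * Xu = C₂ * ((1/C₁) * Xu) := by ring
            _ ≤ C₂ * (‖v‖ * Xu) := mul_le_mul_of_nonneg_left h3 hC₂.le
        exact step.trans e1
      have hB : ‖mulVecE (fwd Pm ((k+1)*N) i) w'‖ ≤ (C₁/C₂) * Xs := by
        rw [hPw']
        have e1 := (hQ (i + (((k+1)*N : ℕ) : ℤ)) (mulVecE (fwd Tm ((k+1)*N) i) v')).2
        rw [hFv'] at e1
        have step : C₁ * (‖v'‖ * Xs) ≤ (C₁/C₂) * Xs := by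
          have h3 := mul_le_mul_of_nonneg_right hvub' hXs0
          calc C₁ * (‖v'‖ * Xs) ≤ C₁ * ((1/C₂) * Xs) := mul_le_mul_of_nonneg_left h3 hC₁.le
            _ = (C₁/C₂) * Xs := by ring
        exact e1.trans step
      have hdm := hdom i
      calc (η^(k+1) * (C₂/C₁)^2) * ‖mulVecE (fwd Pm ((k+1)*N) i) w'‖
          ≤ (η^(k+1) * (C₂/C₁)^2) * ((C₁/C₂) * Xs) :=
            mul_le_mul_of_nonneg_left hB (by positivity)
        _ = (C₂/C₁) * (η^(k+1) * Xs) := by field_simp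
        _ < (C₂/C₁) * Xu := mul_lt_mul_of_pos_left hdm (by positivity)
        _ ≤ ‖mulVecE (fwd Pm ((k+1)*N) i) w‖ := hA
  -- DS3
  · refine ⟨(C₂/C₁)^2 * δ, by positivity, ?_⟩
    intro i
    have hna : ‖unitRep (u i)‖ = 1 := norm_unitRep _
    have hne : ‖unitRep (s i)‖ = 1 := norm_unitRep _
    have hQa0 : mulVecE ((Q i : Matrix (Fin 2) (Fin 2) ℝ)) (unitRep (u i)) ≠ 0 :=
      mulVecE_ne (Q i).isUnit (unitRep_ne _)
    have hQe0 : mulVecE ((Q i : Matrix (Fin 2) (Fin 2) ℝ)) (unitRep (s i)) ≠ 0 :=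
      mulVecE_ne (Q i).isUnit (unitRep_ne _)
    have hu'eq : matAct ((Q i : Matrix (Fin 2) (Fin 2) ℝ)) (u i)
        = Projectivization.mk ℝ (mulVecE ((Q i : Matrix (Fin 2) (Fin 2) ℝ)) (unitRep (u i))) hQa0 := by
      conv_lhs => rw [← mk_unitRep (u i)]
      rw [matAct_mk (Q i).isUnit]
    have hs'eq : matAct ((Q i : Matrix (Fin 2) (Fin 2) ℝ)) (s i)
        = Projectivization.mk ℝ (mulVecE ((Q i : Matrix (Fin 2) (Fin 2) ℝ)) (unitRep (s i))) hQe0 := by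
      conv_lhs => rw [← mk_unitRep (s i)]
      rw [matAct_mk (Q i).isUnit]
    show (C₂/C₁)^2 * δ < projDist (matAct _ (u i)) (matAct _ (s i))
    rw [hu'eq, hs'eq, projDist_mk _ _ hQa0 hQe0]
    have hcl := crossE_lower hC₂ (fun x => (hQ i x).1) (unitRep (u i)) (unitRep (s i))
    have hpd : projDist (u i) (s i) = |crossE (unitRep (u i)) (unitRep (s i))| := by
      conv_lhs => rw [← mk_unitRep (u i), ← mk_unitRep (s i)]
      rw [projDist_mk _ _ (unitRep_ne _) (unitRep_ne _), hna, hne, mul_one, div_one]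
    have hδ' : δ < |crossE (unitRep (u i)) (unitRep (s i))| := by
      rw [← hpd]; exact hDS3 i
    have hQa_pos : 0 < ‖mulVecE ((Q i : Matrix (Fin 2) (Fin 2) ℝ)) (unitRep (u i))‖ :=
      norm_pos_iff.2 hQa0
    have hQe_pos : 0 < ‖mulVecE ((Q i : Matrix (Fin 2) (Fin 2) ℝ)) (unitRep (s i))‖ :=
      norm_pos_iff.2 hQe0
    have hQa_ub : ‖mulVecE ((Q i : Matrix (Fin 2) (Fin 2) ℝ)) (unitRep (u i))‖ ≤ C₁ := by
      have := (hQ i (unitRep (u i))).2; rwa [hna, mul_one] at this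
    have hQe_ub : ‖mulVecE ((Q i : Matrix (Fin 2) (Fin 2) ℝ)) (unitRep (s i))‖ ≤ C₁ := by
      have := (hQ i (unitRep (s i))).2; rwa [hne, mul_one] at this
    have s1 : (C₂/C₁)^2 * δ
        < C₂^2 * |crossE (unitRep (u i)) (unitRep (s i))| / (C₁*C₁) := by
      rw [lt_div_iff₀ (by positivity)]
      have heq : (C₂/C₁)^2 * δ * (C₁*C₁) = C₂^2 * δ := by field_simp
      rw [heq]
      exact mul_lt_mul_of_pos_left hδ' (by positivity)
    have s2 : C₂^2 * |crossE (unitRep (u i)) (unitRep (s i))| / (C₁*C₁)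
        ≤ |crossE (mulVecE ((Q i : Matrix (Fin 2) (Fin 2) ℝ)) (unitRep (u i)))
            (mulVecE ((Q i : Matrix (Fin 2) (Fin 2) ℝ)) (unitRep (s i)))| /
          (‖mulVecE ((Q i : Matrix (Fin 2) (Fin 2) ℝ)) (unitRep (u i))‖ *
            ‖mulVecE ((Q i : Matrix (Fin 2) (Fin 2) ℝ)) (unitRep (s i))‖) :=
      div_le_div₀ (abs_nonneg _) hcl (by positivity)
        (mul_le_mul hQa_ub hQe_ub hQe_pos.le hC₁.le)
    exact lt_of_lt_of_le s1 s2
  -- DS4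
  · refine ⟨C₂ * (c*δ/2)^(k+1) / C₁, by positivity, ?_⟩
    intro i
    have hlow1 := unit_lower T u s N η δ c hη hδ h2 (fun j => hDS3 j) hDS4
    have hlowK := low_iter T u hu N (c*δ/2) (by positivity) hlow1 (k+1) i
    have hQinvx : mulVecE (((Q i)⁻¹ : GL (Fin 2) ℝ) : Matrix (Fin 2) (Fin 2) ℝ)
        (mulVecE ((Q i : Matrix (Fin 2) (Fin 2) ℝ)) (unitRep (u i))) = unitRep (u i) := by
      rw [← mulVecE_mul, hqq i, mulVecE_one]
    have hPx : mulVecE (fwd Pm ((k+1)*N) i)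
          (mulVecE ((Q i : Matrix (Fin 2) (Fin 2) ℝ)) (unitRep (u i)))
        = mulVecE ((Q (i + (((k+1)*N : ℕ) : ℤ)) : Matrix (Fin 2) (Fin 2) ℝ))
            (mulVecE (fwd Tm ((k+1)*N) i) (unitRep (u i))) := by
      rw [fwd_conj T P Q hconj ((k+1)*N) i, mulVecE_mul, mulVecE_mul, hQinvx]
    have hxub : ‖mulVecE ((Q i : Matrix (Fin 2) (Fin 2) ℝ)) (unitRep (u i))‖ ≤ C₁ := by
      have := (hQ i (unitRep (u i))).2
      rwa [norm_unitRep, mul_one] at this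
    have hlb : C₂ * (c*δ/2)^(k+1)
        ≤ ‖mulVecE (fwd Pm ((k+1)*N) i)
            (mulVecE ((Q i : Matrix (Fin 2) (Fin 2) ℝ)) (unitRep (u i)))‖ := by
      rw [hPx]
      have e1 := (hQ (i + (((k+1)*N : ℕ) : ℤ))
        (mulVecE (fwd Tm ((k+1)*N) i) (unitRep (u i)))).1
      exact (mul_le_mul_of_nonneg_left hlowK hC₂.le).trans e1
    have hub := mulVecE_le_opNorm (fwd Pm ((k+1)*N) i)
      (mulVecE ((Q i : Matrix (Fin 2) (Fin 2) ℝ)) (unitRep (u i)))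
    have hop0 : 0 ≤ matOpNorm (fwd Pm ((k+1)*N) i) := norm_nonneg _
    rw [div_le_iff₀ hC₁]
    calc C₂ * (c*δ/2)^(k+1)
        ≤ ‖mulVecE (fwd Pm ((k+1)*N) i)
            (mulVecE ((Q i : Matrix (Fin 2) (Fin 2) ℝ)) (unitRep (u i)))‖ := hlb
      _ ≤ matOpNorm (fwd Pm ((k+1)*N) i)
            * ‖mulVecE ((Q i : Matrix (Fin 2) (Fin 2) ℝ)) (unitRep (u i))‖ := hub
      _ ≤ matOpNorm (fwd Pm ((k+1)*N) i) * C₁ := mul_le_mul_of_nonneg_left hxub hop0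
end transfer
theorem stmt_4 (T P Q : ℤ → GL (Fin 2) ℝ)
    (hTbdd : ∃ C : ℝ, ∀ i : ℤ, matOpNorm (T i : Matrix (Fin 2) (Fin 2) ℝ) ≤ C)
    (hPbdd : ∃ C : ℝ, ∀ i : ℤ, matOpNorm (P i : Matrix (Fin 2) (Fin 2) ℝ) ≤ C)
    (hconj : ∀ i : ℤ, (P i : Matrix (Fin 2) (Fin 2) ℝ) =
      (Q (i + 1) : Matrix (Fin 2) (Fin 2) ℝ) * (T i : Matrix (Fin 2) (Fin 2) ℝ) *
        ((Q i : Matrix (Fin 2) (Fin 2) ℝ))⁻¹)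
    (C₁ C₂ : ℝ) (hC₂ : 0 < C₂) (hC₁₂ : C₂ ≤ C₁)
    (hQ : ∀ (i : ℤ) (x : E2),
      C₂ * ‖x‖ ≤ ‖mulVecE (Q i : Matrix (Fin 2) (Fin 2) ℝ) x‖ ∧
        ‖mulVecE (Q i : Matrix (Fin 2) (Fin 2) ℝ) x‖ ≤ C₁ * ‖x‖) :
    IsDS (fun i => (P i : Matrix (Fin 2) (Fin 2) ℝ)) ↔
      IsDS (fun i => (T i : Matrix (Fin 2) (Fin 2) ℝ)) := by
  have hC₁ : (0:ℝ) < C₁ := lt_of_lt_of_le hC₂ hC₁₂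
  -- units-level conjugacy
  have hconjU : ∀ i : ℤ, P i = Q (i + 1) * T i * (Q i)⁻¹ := by
    intro i
    apply Units.ext
    rw [Units.val_mul, Units.val_mul, Matrix.coe_units_inv]
    exact hconj i
  -- reverse conjugacy: T i = (Q (i+1))⁻¹ * P i * ((Q i)⁻¹)⁻¹
  have hconj2 : ∀ i : ℤ, (T i : Matrix (Fin 2) (Fin 2) ℝ) =
      (((Q (i + 1))⁻¹ : GL (Fin 2) ℝ) : Matrix (Fin 2) (Fin 2) ℝ) *
        (P i : Matrix (Fin 2) (Fin 2) ℝ) *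
        ((((Q i)⁻¹ : GL (Fin 2) ℝ) : Matrix (Fin 2) (Fin 2) ℝ))⁻¹ := by
    intro i
    have hU : T i = (Q (i + 1))⁻¹ * P i * ((Q i)⁻¹)⁻¹ := by
      rw [hconjU i]
      group
    rw [← Matrix.coe_units_inv ((Q i)⁻¹), ← Units.val_mul, ← Units.val_mul, ← hU]
  -- bounds for Q⁻¹
  have hQ2 : ∀ (i : ℤ) (x : E2),
      (1/C₁) * ‖x‖ ≤ ‖mulVecE (((Q i)⁻¹ : GL (Fin 2) ℝ) : Matrix (Fin 2) (Fin 2) ℝ) x‖ ∧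
        ‖mulVecE (((Q i)⁻¹ : GL (Fin 2) ℝ) : Matrix (Fin 2) (Fin 2) ℝ) x‖ ≤ (1/C₂) * ‖x‖ := by
    intro i x
    set y := mulVecE (((Q i)⁻¹ : GL (Fin 2) ℝ) : Matrix (Fin 2) (Fin 2) ℝ) x with hy
    have hQy : mulVecE ((Q i : Matrix (Fin 2) (Fin 2) ℝ)) y = x := by
      rw [hy, ← mulVecE_mul, ← Units.val_mul, mul_inv_cancel, Units.val_one, mulVecE_one]
    have h1 := (hQ i y).1
    have h2 := (hQ i y).2
    rw [hQy] at h1 h2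
    constructor
    · rw [div_mul_eq_mul_div, one_mul, div_le_iff₀ hC₁]
      linarith
    · rw [div_mul_eq_mul_div, one_mul, le_div_iff₀ hC₂]
      linarith
  constructor
  · exact ds_transfer P T (fun i => (Q i)⁻¹) hconj2 (1/C₂) (1/C₁) (by positivity)
      (by apply one_div_le_one_div_of_le hC₂ hC₁₂) hQ2
  · exact ds_transfer T P Q hconj C₁ C₂ hC₂ hC₁₂ hQ
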